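/- There exists a constant c > 0 such that for all real t > 0, one has |F(⌊t⌋) − ((33 − π²)/2)·t²| ≤ c·min(t, t²). -/

import Mathlib

open Real

noncomputable def A (n : ℕ) : ℝ := ∑ j ∈ Finset.Icc 1 n, (1 : ℝ) / j

noncomputable def B (n : ℕ) : ℝ := ∑ j ∈ Finset.Icc 1 n, (1 : ℝ) / j ^ 2

noncomputable def F (n : ℕ) : ℝ :=
  (33 / 2 - 3 * B n) * n ^ 2 - (21 / 2 + 3 * B n) * n + 6 * A n

lemma B_eq_range (n : ℕ) : B n = ∑ j ∈ Finset.range (n + 1), (1 : ℝ) / j ^ 2 := by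
  unfold B
  apply Finset.sum_subset
  · intro x hx
    simp only [Finset.mem_Icc] at hx
    simp only [Finset.mem_range]
    omega
  · intro x hx hx'
    simp only [Finset.mem_Icc, not_and, not_le] at hx'
    simp only [Finset.mem_range] at hx
    have : x = 0 := by omega
    simp [this]

lemma B_tendsto : Filter.Tendsto B Filter.atTop (nhds (π ^ 2 / 6)) := by
  have h := hasSum_zeta_two.tendsto_sum_nat
  have h2 : Filter.Tendsto (fun n : ℕ => ∑ j ∈ Finset.range (n + 1), (1 : ℝ) / j ^ 2)
      Filter.atTop (nhds (π ^ 2 / 6)) :=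
    h.comp (Filter.tendsto_add_atTop_nat 1)
  convert h2 using 2 with n
  exact B_eq_range n

lemma B_nonneg (n : ℕ) : 0 ≤ B n := by
  apply Finset.sum_nonneg; intro j _; positivity

lemma B_mono : Monotone B := by
  intro a b hab
  apply Finset.sum_le_sum_of_subset_of_nonneg
  · exact Finset.Icc_subset_Icc_right hab
  · intro j _ _; positivity

lemma B_le (n : ℕ) : B n ≤ π ^ 2 / 6 := by
  refine ge_of_tendsto B_tendsto ?_
  filter_upwards [Filter.eventually_ge_atTop n] with m hm
  exact B_mono hm

lemma B_tail (n : ℕ) (hn : 1 ≤ n) : π ^ 2 / 6 ≤ B n + 1 / n := by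
  have key : ∀ m, n ≤ m → B m ≤ B n + 1 / n - 1 / m := by
    intro m hm
    induction m with
    | zero => omega
    | succ k ih =>
      rcases Nat.lt_or_ge n (k + 1) with h | h
      · have hk : n ≤ k := by omega
        have hih := ih hk
        have hB : B (k + 1) = B k + 1 / ((k : ℝ) + 1) ^ 2 := by
          unfold B
          rw [Finset.sum_Icc_succ_top (by omega : 1 ≤ k + 1)]
          push_cast; ring
        have hk1 : (1 : ℝ) ≤ k := by exact_mod_cast hn.trans hk
        have hstep : 1 / ((k : ℝ) + 1) ^ 2 ≤ 1 / (k : ℝ) - 1 / ((k : ℝ) + 1) := by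
          rw [div_sub_div _ _ (by linarith) (by linarith)]
          rw [div_le_div_iff₀ (by positivity) (by positivity)]
          ring_nf; nlinarith
        rw [hB]
        push_cast
        linarith
      · have : n = k + 1 := by omega
        subst this
        have : (0:ℝ) < (k:ℝ) + 1 := by positivity
        push_cast
        simp
  refine le_of_tendsto B_tendsto ?_
  filter_upwards [Filter.eventually_ge_atTop n] with m hm
  have h := key m hm
  rcases Nat.eq_zero_or_pos m with h0 | h0
  · omega
  · have : (0:ℝ) < m := by exact_mod_cast h0
    have : 0 ≤ 1 / (m:ℝ) := by positivity
    linarith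

lemma A_nonneg (n : ℕ) : 0 ≤ A n := by
  apply Finset.sum_nonneg; intro j _; positivity

lemma A_le (n : ℕ) : A n ≤ n := by
  unfold A
  calc ∑ j ∈ Finset.Icc 1 n, (1:ℝ)/j ≤ ∑ j ∈ Finset.Icc 1 n, 1 := by
        apply Finset.sum_le_sum
        intro j hj
        simp only [Finset.mem_Icc] at hj
        have : (1:ℝ) ≤ j := by exact_mod_cast hj.1
        rw [div_le_one (by linarith)]; exact this
    _ = n := by simp

set_option maxHeartbeats 1000000 in
theorem stmt14 :
    ∃ c > 0, ∀ t : ℝ, 0 < t →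
      |F ⌊t⌋₊ - (33 - Real.pi ^ 2) / 2 * t ^ 2| ≤ c * min t (t ^ 2) := by
  have hP1 : π ^ 2 ≤ 10 := by nlinarith [Real.pi_lt_d2, Real.pi_gt_three]
  have hP2 : (9:ℝ) ≤ π ^ 2 := by nlinarith [Real.pi_gt_three]
  refine ⟨100, by norm_num, ?_⟩
  intro t ht
  rcases lt_or_ge t 1 with ht1 | ht1
  · -- small t : floor = 0
    have h0 : ⌊t⌋₊ = 0 := Nat.floor_eq_zero.mpr ht1
    have hF : F 0 = 0 := by simp [F, A, B]
    rw [h0, hF]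
    have hmin : min t (t ^ 2) = t ^ 2 := by
      apply min_eq_right
      nlinarith
    rw [hmin]
    rw [abs_of_nonpos (by nlinarith)]
    nlinarith
  · -- large t
    set n := ⌊t⌋₊ with hn
    have hn1 : 1 ≤ n := Nat.le_floor (by exact_mod_cast ht1)
    have hx1 : (1:ℝ) ≤ (n:ℝ) := by exact_mod_cast hn1
    have hxle : (n:ℝ) ≤ t := Nat.floor_le ht.le
    have hxlt : t < (n:ℝ) + 1 := Nat.lt_floor_add_one t
    have hmin : min t (t ^ 2) = t := by
      apply min_eq_left; nlinarith
    rw [hmin]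
    set x : ℝ := (n:ℝ) with hxdef
    have hB1 : B n ≤ π ^ 2 / 6 := B_le n
    have hB2 : π ^ 2 / 6 ≤ B n + 1 / x := B_tail n hn1
    have hB0 : 0 ≤ B n := B_nonneg n
    have hA0 : 0 ≤ A n := A_nonneg n
    have hA1 : A n ≤ x := A_le n
    have hxpos : (0:ℝ) < x := by linarith
    -- tail bound times x^2
    have h6 : (π ^ 2 / 6 - B n) * x ^ 2 ≤ x := by
      have h := mul_le_mul_of_nonneg_right (show π ^ 2 / 6 - B n ≤ 1 / x by linarith)
        (sq_nonneg x)
      have hx : (1 / x) * x ^ 2 = x := by field_simp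
      linarith
    have h6' : 0 ≤ (π ^ 2 / 6 - B n) * x ^ 2 :=
      mul_nonneg (by linarith) (sq_nonneg x)
    have h7 : t ^ 2 - x ^ 2 ≤ 2 * t := by nlinarith
    have h8 : x ^ 2 ≤ t ^ 2 := by nlinarith
    have hBx : B n * x ≤ (10 / 6) * x :=
      mul_le_mul_of_nonneg_right (by linarith) (by linarith)
    have hBx0 : 0 ≤ B n * x := mul_nonneg hB0 hxpos.le
    -- decompose
    have hdec : F n - (33 - π ^ 2) / 2 * t ^ 2 =
        (33 - π ^ 2) / 2 * (x ^ 2 - t ^ 2) + 3 * ((π ^ 2 / 6 - B n) * x ^ 2)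
          - (21 / 2) * x - 3 * (B n * x) + 6 * A n := by
      unfold F; push_cast; ring
    have hc1 : (33 - π ^ 2) / 2 * (x ^ 2 - t ^ 2) ≤ 0 := by nlinarith
    have hc2 : -(24 * t) ≤ (33 - π ^ 2) / 2 * (x ^ 2 - t ^ 2) := by nlinarith
    rw [abs_le]
    constructor
    · rw [hdec]; linarith
    · rw [hdec]; linarith
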